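/- arXiv:1801.04504 — 4 statements merged into one kernel-verified Lean document; each statement's English description precedes it below -/
import Mathlib

section
/- Let μ be a real number and let k, i be integers with 1 ≤ k < i. Define f : ℝ → ℝ by f(u) = Σ_{l=k}^{i-1} (u^l / l!) · ( Σ_{l'=0}^{i-l-1} (μ - u)^{l'} / l'! ). Then f is differentiable on ℝ and for every real u its derivative is f'(u) = (u^{k-1} / (k-1)!) · Σ_{l=0}^{i-k-1} (μ - u)^l / l!. -/
lemma aux_T (μ : ℝ) (n : ℕ) (u : ℝ) :
    HasDerivAt (fun u : ℝ => ∑ m ∈ Finset.range n, (μ - u) ^ m / (m.factorial : ℝ))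
      (-(∑ m ∈ Finset.range (n - 1), (μ - u) ^ m / (m.factorial : ℝ))) u := by
  induction n with
  | zero => simpa using hasDerivAt_const u (0 : ℝ)
  | succ n ih =>
    have h1 : HasDerivAt (fun u : ℝ => (μ - u) ^ n / (n.factorial : ℝ))
        ((n : ℝ) * (μ - u) ^ (n - 1) * (-1) / (n.factorial : ℝ)) u := by
      have := (((hasDerivAt_id u).const_sub μ).pow n)
      simpa using this.div_const (n.factorial : ℝ)
    have h := ih.fun_add h1
    have heq : (fun u : ℝ => ∑ m ∈ Finset.range (n + 1), (μ - u) ^ m / (m.factorial : ℝ))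
        = fun u : ℝ => (∑ m ∈ Finset.range n, (μ - u) ^ m / (m.factorial : ℝ))
          + (μ - u) ^ n / (n.factorial : ℝ) := by
      funext v; rw [Finset.sum_range_succ]
    rw [heq]
    refine h.congr_deriv ?_
    cases n with
    | zero => simp
    | succ m =>
      simp only [Nat.add_sub_cancel]
      rw [Finset.sum_range_succ]
      have hfac : (((m+1).factorial : ℝ)) = (m+1) * (m.factorial : ℝ) := by
        push_cast [Nat.factorial_succ]; ring
      have hfm : (m.factorial : ℝ) ≠ 0 := Nat.cast_ne_zero.mpr m.factorial_ne_zero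
      have h1m : ((m:ℝ) + 1) ≠ 0 := by positivity
      rw [hfac]
      push_cast
      field_simp
      ring

/-- The telescoping-derivative identity underlying the marginal PDF of the
k-th smallest user distance (Appendix A of the paper): for `1 ≤ k < i`, the
function `f u = ∑_{l=k}^{i-1} (u^l / l!) ∑_{l'=0}^{i-l-1} (μ - u)^{l'} / l'!`
is differentiable with derivative
`f' u = (u^{k-1}/(k-1)!) ∑_{l=0}^{i-k-1} (μ - u)^l / l!`. -/
theorem stmt_0 (μ : ℝ) (k i : ℕ) (hk : 1 ≤ k) (hki : k < i) :
    Differentiable ℝ (fun u : ℝ =>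
      ∑ l ∈ Finset.Ico k i, u ^ l / (l.factorial : ℝ) *
        ∑ m ∈ Finset.range (i - l), (μ - u) ^ m / (m.factorial : ℝ)) ∧
    ∀ u : ℝ,
      deriv (fun u : ℝ =>
        ∑ l ∈ Finset.Ico k i, u ^ l / (l.factorial : ℝ) *
          ∑ m ∈ Finset.range (i - l), (μ - u) ^ m / (m.factorial : ℝ)) u
      = u ^ (k - 1) / ((k - 1).factorial : ℝ) *
          ∑ m ∈ Finset.range (i - k), (μ - u) ^ m / (m.factorial : ℝ) := by
  have key : ∀ u : ℝ, HasDerivAt (fun u : ℝ =>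
      ∑ l ∈ Finset.Ico k i, u ^ l / (l.factorial : ℝ) *
        ∑ m ∈ Finset.range (i - l), (μ - u) ^ m / (m.factorial : ℝ))
      (u ^ (k - 1) / ((k - 1).factorial : ℝ) *
          ∑ m ∈ Finset.range (i - k), (μ - u) ^ m / (m.factorial : ℝ)) u := by
    intro u
    set g : ℕ → ℝ := fun l => u ^ (l - 1) / (((l - 1).factorial : ℝ)) *
        ∑ m ∈ Finset.range (i - l), (μ - u) ^ m / (m.factorial : ℝ) with hg
    have hterm : ∀ l ∈ Finset.Ico k i, HasDerivAt (fun u : ℝ =>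
        u ^ l / (l.factorial : ℝ) * ∑ m ∈ Finset.range (i - l), (μ - u) ^ m / (m.factorial : ℝ))
        (g l - g (l + 1)) u := by
      intro l hl
      have hl1 : l ≠ 0 := by
        have := (Finset.mem_Ico.mp hl).1; omega
      obtain ⟨l', rfl⟩ := Nat.exists_eq_succ_of_ne_zero hl1
      have hp : HasDerivAt (fun u : ℝ => u ^ (l' + 1) / ((l' + 1).factorial : ℝ))
          ((↑(l' + 1) * u ^ l') / ((l' + 1).factorial : ℝ)) u :=
        (hasDerivAt_pow (l' + 1) u).div_const _
      have h := hp.fun_mul (aux_T μ (i - (l' + 1)) u)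
      refine h.congr_deriv ?_
      have hss : i - (l' + 1) - 1 = i - (l' + 1 + 1) := by omega
      have hfac : (((l' + 1).factorial : ℝ)) = (l' + 1) * (l'.factorial : ℝ) := by
        push_cast [Nat.factorial_succ]; ring
      have hfm : (l'.factorial : ℝ) ≠ 0 := Nat.cast_ne_zero.mpr l'.factorial_ne_zero
      have h1m : ((l' : ℝ) + 1) ≠ 0 := by positivity
      simp only [hg, Nat.add_sub_cancel, hss, hfac]
      push_cast
      field_simp
      ring
    have hsum := HasDerivAt.fun_sum hterm
    have hval : (∑ l ∈ Finset.Ico k i, (g l - g (l + 1)))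
        = u ^ (k - 1) / ((k - 1).factorial : ℝ) *
          ∑ m ∈ Finset.range (i - k), (μ - u) ^ m / (m.factorial : ℝ) := by
      have h1 : ∀ n : ℕ, (∑ l ∈ Finset.range n, (g l - g (l + 1))) = g 0 - g n :=
        fun n => Finset.sum_range_sub' g n
      rw [Finset.sum_Ico_eq_sub _ (le_of_lt hki), h1, h1]
      have hgi : g i = 0 := by simp [hg]
      have hgk : g k = u ^ (k - 1) / ((k - 1).factorial : ℝ) *
          ∑ m ∈ Finset.range (i - k), (μ - u) ^ m / (m.factorial : ℝ) := rfl
      rw [hgi, ← hgk]; ring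
    rw [← hval]
    exact hsum
  exact ⟨fun u => (key u).differentiableAt, fun u => (key u).deriv⟩
end

section
/- Let j, i be integers with 1 ≤ j < i. Define g : ℝ × ℝ → ℝ by g(u, v) = Σ_{l=j}^{i-1} (u^l / l!) · e^{-v} · ( Σ_{l'=0}^{i-l-1} (v - u)^{l'} / l'! ). Then for all real u, v, the iterated partial derivative ∂/∂v ( ∂/∂u g )(u, v) exists and equals -( u^{j-1} / (j-1)! ) · e^{-v} · ( (v - u)^{i-j-1} / (i-j-1)! ). -/
open Finset

/-- Truncated exponential series. -/
noncomputable def expPoly (n : ℕ) (x : ℝ) : ℝ :=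
  ∑ m ∈ Finset.range n, x ^ m / (m.factorial : ℝ)

lemma expPoly_hasDerivAt (n : ℕ) (x : ℝ) :
    HasDerivAt (fun y : ℝ => expPoly n y) (expPoly (n - 1) x) x := by
  cases n with
  | zero => simpa [expPoly] using hasDerivAt_const x (0 : ℝ)
  | succ n =>
    have h : HasDerivAt (fun y : ℝ => ∑ m ∈ Finset.range (n + 1), y ^ m / (m.factorial : ℝ))
        (∑ m ∈ Finset.range (n + 1), (m : ℝ) * x ^ (m - 1) / (m.factorial : ℝ)) x := by
      apply HasDerivAt.fun_sum
      intro m _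
      simpa using (hasDerivAt_pow m x).div_const (m.factorial : ℝ)
    have key : (∑ m ∈ Finset.range (n + 1), (m : ℝ) * x ^ (m - 1) / (m.factorial : ℝ))
        = expPoly n x := by
      rw [Finset.sum_range_succ']
      simp only [expPoly, Nat.cast_zero, zero_mul, zero_div, add_zero]
      refine Finset.sum_congr rfl fun m _ => ?_
      have hfac : ((m + 1).factorial : ℝ) = (m + 1 : ℝ) * (m.factorial : ℝ) := by
        push_cast [Nat.factorial_succ]; ring
      have hne : (m.factorial : ℝ) ≠ 0 := Nat.cast_ne_zero.mpr m.factorial_ne_zero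
      have hne1 : (m + 1 : ℝ) ≠ 0 := by positivity
      rw [Nat.add_sub_cancel, hfac]
      push_cast
      field_simp
    simpa [expPoly, key] using h

lemma expPoly_succ_sub (n : ℕ) (x : ℝ) :
    expPoly (n + 1) x = expPoly n x + x ^ n / (n.factorial : ℝ) := by
  simp [expPoly, Finset.sum_range_succ]

/-- The analytic core of Appendix B of the paper: for `1 ≤ j < i` and
`g (u, v) = ∑_{l=j}^{i-1} (u^l/l!) e^{-v} ∑_{l'=0}^{i-l-1} (v-u)^{l'}/l'!`,
the iterated partial derivative `∂/∂v (∂/∂u g)` exists everywhere and equals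
`-(u^{j-1}/(j-1)!) e^{-v} (v-u)^{i-j-1}/(i-j-1)!`. -/
theorem stmt_2 (j i : ℕ) (hj : 1 ≤ j) (hji : j < i)
    (g : ℝ → ℝ → ℝ)
    (hg : ∀ u v, g u v = ∑ l ∈ Finset.Ico j i, (u ^ l / (l.factorial : ℝ)) *
      Real.exp (-v) * ∑ m ∈ Finset.range (i - l), (v - u) ^ m / (m.factorial : ℝ)) :
    ∀ u v : ℝ,
      DifferentiableAt ℝ (fun u' : ℝ => g u' v) u ∧
      HasDerivAt (fun v' : ℝ => deriv (fun u' : ℝ => g u' v') u)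
        (-(u ^ (j - 1) / ((j - 1).factorial : ℝ)) * Real.exp (-v) *
          ((v - u) ^ (i - j - 1) / ((i - j - 1).factorial : ℝ))) v := by
  intro u v
  set c : ℝ := u ^ (j - 1) / ((j - 1).factorial : ℝ) with hc
  -- Step 1: the partial derivative in u, for every v'.
  have step1 : ∀ v' : ℝ, HasDerivAt (fun u' : ℝ => g u' v')
      (c * Real.exp (-v') * expPoly (i - j) (v' - u)) u := by
    intro v'
    -- abbreviation for the telescoping terms
    set A : ℕ → ℝ := fun l =>
      u ^ (l - 1) / ((l - 1).factorial : ℝ) * Real.exp (-v') * expPoly (i - l) (v' - u) with hA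
    have hterm : ∀ l ∈ Finset.Ico j i,
        HasDerivAt (fun u' : ℝ => (u' ^ l / (l.factorial : ℝ)) * Real.exp (-v') *
            expPoly (i - l) (v' - u')) (A l - A (l + 1)) u := by
      intro l hl
      obtain ⟨hjl, hli⟩ := Finset.mem_Ico.mp hl
      have hl1 : 1 ≤ l := le_trans hj hjl
      have h1 : HasDerivAt (fun u' : ℝ => u' ^ l / (l.factorial : ℝ) * Real.exp (-v'))
          ((l : ℝ) * u ^ (l - 1) / (l.factorial : ℝ) * Real.exp (-v')) u := by
        simpa [mul_div_assoc] using
          (((hasDerivAt_pow l u).div_const (l.factorial : ℝ)).mul_const (Real.exp (-v')))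
      have hsub : HasDerivAt (fun u' : ℝ => v' - u') (-1 : ℝ) u := by
        simpa using (hasDerivAt_id u).const_sub v'
      have h2 : HasDerivAt (fun u' : ℝ => expPoly (i - l) (v' - u'))
          (expPoly (i - l - 1) (v' - u) * (-1)) u :=
        (expPoly_hasDerivAt (i - l) (v' - u)).comp u hsub
      have h := h1.mul h2
      refine h.congr_deriv ?_
      have hfac : ((l : ℝ)) * u ^ (l - 1) / (l.factorial : ℝ)
          = u ^ (l - 1) / (((l - 1).factorial : ℝ)) := by
        rw [← Nat.mul_factorial_pred (by omega : l ≠ 0)]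
        have hne : ((l - 1).factorial : ℝ) ≠ 0 := Nat.cast_ne_zero.mpr (Nat.factorial_ne_zero _)
        have hlne : (l : ℝ) ≠ 0 := Nat.cast_ne_zero.mpr (by omega)
        push_cast
        field_simp
      have hidx1 : i - (l + 1) = i - l - 1 := by omega
      have hidx2 : l + 1 - 1 = l := by omega
      simp only [hA, hidx1, hidx2, hfac]
      ring
    have hsum : HasDerivAt (fun u' : ℝ => ∑ l ∈ Finset.Ico j i,
        (u' ^ l / (l.factorial : ℝ)) * Real.exp (-v') * expPoly (i - l) (v' - u'))
        (∑ l ∈ Finset.Ico j i, (A l - A (l + 1))) u := HasDerivAt.fun_sum hterm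
    have htel : (∑ l ∈ Finset.Ico j i, (A l - A (l + 1))) = A j - A i := by
      rw [Finset.sum_Ico_eq_sum_range]
      have := Finset.sum_range_sub' (fun k => A (j + k)) (i - j)
      simpa [Nat.add_sub_cancel' (le_of_lt hji), add_assoc] using this
    have hAi : A i = 0 := by simp [hA, expPoly]
    have hAj : A j = c * Real.exp (-v') * expPoly (i - j) (v' - u) := rfl
    have hgfun : (fun u' : ℝ => g u' v') = fun u' : ℝ => ∑ l ∈ Finset.Ico j i,
        (u' ^ l / (l.factorial : ℝ)) * Real.exp (-v') * expPoly (i - l) (v' - u') := by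
      funext u'
      rw [hg]
      rfl
    rw [hgfun]
    rw [htel, hAi, sub_zero, hAj] at hsum
    exact hsum
  refine ⟨(step1 v).differentiableAt, ?_⟩
  -- Step 2: the function v' ↦ ∂g/∂u (u, v') is explicit.
  have hfun : (fun v' : ℝ => deriv (fun u' : ℝ => g u' v') u)
      = fun v' : ℝ => c * Real.exp (-v') * expPoly (i - j) (v' - u) := by
    funext v'
    exact (step1 v').deriv
  rw [hfun]
  have h1 : HasDerivAt (fun v' : ℝ => Real.exp (-v')) (Real.exp (-v) * (-1)) v :=
    HasDerivAt.exp (by simpa using hasDerivAt_neg v)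
  have h2 : HasDerivAt (fun v' : ℝ => expPoly (i - j) (v' - u))
      (expPoly (i - j - 1) (v - u) * 1) v :=
    by
      have hs : HasDerivAt (fun v' : ℝ => v' - u) 1 v := (hasDerivAt_id' v).sub_const u
      exact (expPoly_hasDerivAt (i - j) (v - u)).comp v hs
  have h := (h1.const_mul c).mul h2
  refine h.congr_deriv ?_
  have hn : i - j = (i - j - 1) + 1 := by omega
  have hEdiff : expPoly (i - j) (v - u)
      = expPoly (i - j - 1) (v - u) + (v - u) ^ (i - j - 1) / ((i - j - 1).factorial : ℝ) := by
    rw [hn, expPoly_succ_sub]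
    simp
  rw [hEdiff]
  ring
end

section
/- Let Δ > 0, λ > 0, and 0 ≤ L₁ < L₂ be real numbers, and let j, k, i be integers with 1 ≤ j ≤ k < i. Set μ = Δ(L₂² - L₁²)λ and C = Σ_{l=j}^{i-1} e^{-μ} μ^l / l!, assume C ≠ 0, and define f(r) = (2Δλ r / C) · e^{-μ} · ( (Δ(r² - L₁²)λ)^{k-1} / (k-1)! ) · Σ_{l=0}^{i-k-1} (Δ(L₂² - r²)λ)^l / l!. Then ∫_{L₁}^{L₂} f(r) dr = ( Σ_{m=k}^{i-1} e^{-μ} μ^m / m! ) / C. In particular, when k = j this integral equals 1. -/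
open Finset Real

private lemma fact_mul_aux (m : ℕ) (hm : 1 ≤ m) (x : ℝ) :
    (m : ℝ) * x / (Nat.factorial m : ℝ) = x / (Nat.factorial (m - 1) : ℝ) := by
  obtain ⟨p, rfl⟩ : ∃ p, m = p + 1 := ⟨m - 1, by omega⟩
  rw [Nat.factorial_succ]
  push_cast
  have h0 : ((p:ℝ)+1) ≠ 0 := by positivity
  have h1 : ((Nat.factorial p : ℕ) : ℝ) ≠ 0 := Nat.cast_ne_zero.mpr (Nat.factorial_ne_zero p)
  field_simp

private lemma row_deriv (k L : ℕ) (hk : 1 ≤ k) (μ u : ℝ) :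
    HasDerivAt (fun x : ℝ => ∑ s ∈ range (L+1),
        x ^ (k+s) / (Nat.factorial (k+s) : ℝ) * ((μ - x) ^ (L-s) / (Nat.factorial (L-s) : ℝ)))
      (u ^ (k-1) / (Nat.factorial (k-1) : ℝ) * ((μ - u) ^ L / (Nat.factorial L : ℝ))) u := by
  set A : ℕ → ℝ := fun s => if s ≤ L then
      u ^ (k+s-1) / (Nat.factorial (k+s-1) : ℝ) * ((μ - u) ^ (L-s) / (Nat.factorial (L-s) : ℝ))
    else 0 with hA
  have hsum : u ^ (k-1) / (Nat.factorial (k-1) : ℝ) * ((μ - u) ^ L / (Nat.factorial L : ℝ))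
      = ∑ s ∈ range (L+1), (A s - A (s+1)) := by
    rw [Finset.sum_range_sub']
    simp [hA]
  rw [hsum]
  apply HasDerivAt.fun_sum
  intro s hs
  have hsL : s ≤ L := by simpa [Nat.lt_succ_iff] using Finset.mem_range.mp hs
  have h1 : HasDerivAt (fun x : ℝ => x ^ (k+s) / (Nat.factorial (k+s) : ℝ))
      (((k+s : ℕ) : ℝ) * u ^ (k+s-1) / (Nat.factorial (k+s) : ℝ)) u :=
    (hasDerivAt_pow _ u).div_const _
  have h2 : HasDerivAt (fun x : ℝ => (μ - x) ^ (L-s) / (Nat.factorial (L-s) : ℝ))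
      ((((L-s : ℕ) : ℝ) * (μ - u) ^ (L-s-1) * (0-1)) / (Nat.factorial (L-s) : ℝ)) u :=
    (((hasDerivAt_const u μ).sub (hasDerivAt_id u)).pow _).div_const _
  have h := h1.mul h2
  refine h.congr_deriv ?_
  symm
  have e1 : ((k+s : ℕ) : ℝ) * u ^ (k+s-1) / (Nat.factorial (k+s) : ℝ)
      = u ^ (k+s-1) / (Nat.factorial (k+s-1) : ℝ) := fact_mul_aux _ (by omega) _
  rcases eq_or_lt_of_le hsL with rfl | hlt
  · have : A s = u ^ (k+s-1) / (Nat.factorial (k+s-1) : ℝ) * ((μ - u) ^ (s-s) / (Nat.factorial (s-s) : ℝ)) := by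
      simp [hA]
    rw [this]
    have : A (s+1) = 0 := by simp [hA]
    rw [this, e1]
    simp [Nat.sub_self]
  · have hAs : A s = u ^ (k+s-1) / (Nat.factorial (k+s-1) : ℝ) * ((μ - u) ^ (L-s) / (Nat.factorial (L-s) : ℝ)) := by
      simp [hA, hsL]
    have hAs1 : A (s+1) = u ^ (k+s) / (Nat.factorial (k+s) : ℝ) * ((μ - u) ^ (L-s-1) / (Nat.factorial (L-s-1) : ℝ)) := by
      have : k + (s+1) - 1 = k + s := by omega
      simp [hA, Nat.succ_le_of_lt hlt, this, Nat.sub_sub]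
    have e2 : ((L-s : ℕ) : ℝ) * (μ - u) ^ (L-s-1) / (Nat.factorial (L-s) : ℝ)
      = (μ - u) ^ (L-s-1) / (Nat.factorial (L-s-1) : ℝ) := fact_mul_aux _ (by omega) _
    rw [hAs, hAs1, e1]
    rw [show (((L-s : ℕ) : ℝ) * (μ - u) ^ (L-s-1) * (0-1)) / (Nat.factorial (L-s) : ℝ)
      = -(((L-s : ℕ) : ℝ) * (μ - u) ^ (L-s-1) / (Nat.factorial (L-s) : ℝ)) by ring, e2]
    ring

private lemma G_deriv (k n : ℕ) (hk : 1 ≤ k) (μ u : ℝ) :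
    HasDerivAt (fun x : ℝ => ∑ l ∈ range n, ∑ s ∈ range (l+1),
        x ^ (k+s) / (Nat.factorial (k+s) : ℝ) * ((μ - x) ^ (l-s) / (Nat.factorial (l-s) : ℝ)))
      (u ^ (k-1) / (Nat.factorial (k-1) : ℝ) * ∑ l ∈ range n, (μ - u) ^ l / (Nat.factorial l : ℝ)) u := by
  rw [Finset.mul_sum]
  exact HasDerivAt.fun_sum fun l _ => row_deriv k l hk μ u

/-- The marginal density `f_{d_k | S_{K₁}}` of Theorem 1 of the paper has
total mass `(∑_{m=k}^{i-1} e^{-μ} μ^m/m!) / C` over `[L₁, L₂]`; in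
particular it integrates to 1 when `k = j`. -/
theorem stmt_4 (Δ lam L₁ L₂ : ℝ) (hΔ : 0 < Δ) (hlam : 0 < lam)
    (hL₁ : 0 ≤ L₁) (hL : L₁ < L₂) (j k i : ℕ) (hj : 1 ≤ j) (hjk : j ≤ k) (hki : k < i)
    (μ C : ℝ) (hμ : μ = Δ * (L₂ ^ 2 - L₁ ^ 2) * lam)
    (hC : C = ∑ l ∈ Finset.Ico j i, Real.exp (-μ) * μ ^ l / (l.factorial : ℝ))
    (hC0 : C ≠ 0)
    (f : ℝ → ℝ)
    (hf : ∀ r, f r = (2 * Δ * lam * r / C) * Real.exp (-μ) *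
      ((Δ * (r ^ 2 - L₁ ^ 2) * lam) ^ (k - 1) / ((k - 1).factorial : ℝ)) *
      ∑ l ∈ Finset.range (i - k), (Δ * (L₂ ^ 2 - r ^ 2) * lam) ^ l / (l.factorial : ℝ)) :
    (∫ r in L₁..L₂, f r) =
      (∑ m ∈ Finset.Ico k i, Real.exp (-μ) * μ ^ m / (m.factorial : ℝ)) / C ∧
    (k = j → (∫ r in L₁..L₂, f r) = 1) := by
  set a : ℝ := Δ * lam with ha
  set n : ℕ := i - k with hn
  set F : ℝ → ℝ := fun r => Real.exp (-μ) / C * ∑ l ∈ Finset.range n, ∑ s ∈ Finset.range (l+1),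
      (a * (r^2 - L₁^2)) ^ (k+s) / (Nat.factorial (k+s) : ℝ) *
      ((μ - a * (r^2 - L₁^2)) ^ (l-s) / (Nat.factorial (l-s) : ℝ)) with hF
  have hk1 : 1 ≤ k := le_trans hj hjk
  have hderiv : ∀ r : ℝ, HasDerivAt F (f r) r := by
    intro r
    have hin : HasDerivAt (fun x : ℝ => a * (x^2 - L₁^2)) (a * (2*r)) r := by
      have := ((hasDerivAt_pow 2 r).sub (hasDerivAt_const r (L₁^2))).const_mul a
      simpa using this
    have hG := (G_deriv k n hk1 μ (a * (r^2 - L₁^2))).comp r hin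
    have hD := hG.const_mul (Real.exp (-μ) / C)
    refine hD.congr_deriv ?_
    symm
    rw [hf r]
    have hb1 : Δ * (r^2 - L₁^2) * lam = a * (r^2 - L₁^2) := by rw [ha]; ring
    have hb2 : Δ * (L₂^2 - r^2) * lam = μ - a * (r^2 - L₁^2) := by rw [ha, hμ]; ring
    rw [hb1, hb2]
    ring
  have hfc : Continuous f := by
    have hfe : f = fun r => (2 * Δ * lam * r / C) * Real.exp (-μ) *
      ((Δ * (r ^ 2 - L₁ ^ 2) * lam) ^ (k - 1) / ((k - 1).factorial : ℝ)) *
      ∑ l ∈ Finset.range (i - k), (Δ * (L₂ ^ 2 - r ^ 2) * lam) ^ l / (l.factorial : ℝ) := funext hf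
    rw [hfe]
    apply Continuous.mul
    · fun_prop
    · exact continuous_finset_sum _ fun l _ => by fun_prop
  have hint : (∫ r in L₁..L₂, f r) = F L₂ - F L₁ :=
    intervalIntegral.integral_eq_sub_of_hasDerivAt (fun r _ => hderiv r)
      (hfc.intervalIntegrable _ _)
  have hFL1 : F L₁ = 0 := by
    simp only [hF]
    rw [show a * (L₁^2 - L₁^2) = 0 by ring]
    rw [Finset.sum_eq_zero, mul_zero]
    intro l _
    apply Finset.sum_eq_zero
    intro s _
    rw [zero_pow (by omega : k + s ≠ 0), zero_div, zero_mul]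
  have hμ' : a * (L₂^2 - L₁^2) = μ := by rw [ha, hμ]; ring
  have hFL2 : F L₂ = Real.exp (-μ) / C *
      ∑ l ∈ Finset.range n, μ ^ (k+l) / (Nat.factorial (k+l) : ℝ) := by
    simp only [hF, hμ', sub_self]
    congr 1
    apply Finset.sum_congr rfl
    intro l _
    rw [Finset.sum_eq_single l]
    · simp [Nat.sub_self]
    · intro s hs hne
      have hls : l - s ≠ 0 := by
        have := Finset.mem_range.mp hs; omega
      rw [zero_pow hls, zero_div, mul_zero]
    · intro h; exact absurd (Finset.self_mem_range_succ l) h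
  have hsum : (∑ m ∈ Finset.Ico k i, Real.exp (-μ) * μ ^ m / (m.factorial : ℝ))
      = Real.exp (-μ) * ∑ l ∈ Finset.range n, μ ^ (k+l) / (Nat.factorial (k+l) : ℝ) := by
    rw [Finset.sum_Ico_eq_sum_range, Finset.mul_sum]
    apply Finset.sum_congr rfl
    intro l _
    rw [mul_div_assoc]
  have hval : (∫ r in L₁..L₂, f r) =
      (∑ m ∈ Finset.Ico k i, Real.exp (-μ) * μ ^ m / (m.factorial : ℝ)) / C := by
    rw [hint, hFL1, hFL2, sub_zero, hsum]
    ring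
  refine ⟨hval, fun hkj => ?_⟩
  rw [hval]
  subst hkj
  rw [← hC, div_self hC0]
end

section
/- Let Δ > 0, λ > 0, and 0 ≤ L₁ < L₂ be real numbers, and let j, i be integers with 1 ≤ j < i. Set μ = Δ(L₂² - L₁²)λ and C = 1 - Σ_{l=0}^{i-1} e^{-μ} μ^l / l!, assume C ≠ 0, and define f(r, s) = ( (2Δλ r)(2Δλ s) / C ) · e^{-Δ(s² - L₁²)λ} · ( (Δ(r² - L₁²)λ)^{j-1} / (j-1)! ) · ( (Δ(s² - r²)λ)^{i-j-1} / (i-j-1)! ). Then ∫_{L₁}^{L₂} ( ∫_{L₁}^{s} f(r, s) dr ) ds = 1. -/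
open intervalIntegral

/-- Beta-type integral with natural exponents. -/
lemma beta_nat (b : ℕ) : ∀ (a : ℕ) (c : ℝ),
    (∫ x in (0:ℝ)..c, x ^ a * (c - x) ^ b)
      = c ^ (a + b + 1) * (a.factorial * b.factorial) / ((a + b + 1).factorial) := by
  induction b with
  | zero =>
    intro a c
    simp only [pow_zero, mul_one, integral_pow, Nat.factorial_one]
    rw [Nat.add_zero, Nat.factorial_succ]
    have ha : ((a:ℝ) + 1) ≠ 0 := by positivity
    have hfa : (a.factorial : ℝ) ≠ 0 := Nat.cast_ne_zero.2 a.factorial_pos.ne'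
    push_cast
    field_simp
    ring
  | succ b ih =>
    intro a c
    have hu : ∀ x ∈ Set.uIcc (0:ℝ) c,
        HasDerivAt (fun x : ℝ => (c - x) ^ (b + 1))
          (-(((b:ℝ) + 1) * (c - x) ^ b)) x := by
      intro x _
      have h := ((hasDerivAt_id x).const_sub c).pow (b + 1)
      refine h.congr_deriv ?_
      push_cast
      simp only [Nat.add_sub_cancel, id_eq]
      ring
    have hv : ∀ x ∈ Set.uIcc (0:ℝ) c,
        HasDerivAt (fun x : ℝ => x ^ (a + 1) / ((a:ℝ) + 1)) (x ^ a) x := by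
      intro x _
      have ha : ((a:ℝ) + 1) ≠ 0 := by positivity
      have h := (hasDerivAt_pow (a + 1) x).div_const ((a:ℝ) + 1)
      refine h.congr_deriv ?_
      simp only [Nat.add_sub_cancel]
      push_cast
      field_simp
    have hu' : IntervalIntegrable (fun x : ℝ => -(((b:ℝ) + 1) * (c - x) ^ b))
        MeasureTheory.volume 0 c := (by fun_prop : Continuous _).intervalIntegrable _ _
    have hv' : IntervalIntegrable (fun x : ℝ => x ^ a) MeasureTheory.volume 0 c :=
      (by fun_prop : Continuous _).intervalIntegrable _ _
    have parts := integral_mul_deriv_eq_deriv_mul hu hv hu' hv'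
    have hcomm : (∫ x in (0:ℝ)..c, x ^ a * (c - x) ^ (b + 1))
        = ∫ x in (0:ℝ)..c, (c - x) ^ (b + 1) * x ^ a := by
      apply integral_congr; intro x _; ring
    rw [hcomm, parts]
    have hswap : (∫ x in (0:ℝ)..c, -(((b:ℝ) + 1) * (c - x) ^ b) * (x ^ (a + 1) / ((a:ℝ) + 1)))
        = (-(((b:ℝ) + 1) / ((a:ℝ) + 1))) * ∫ x in (0:ℝ)..c, x ^ (a + 1) * (c - x) ^ b := by
      rw [← integral_const_mul]
      apply integral_congr; intro x _
      have ha : ((a:ℝ) + 1) ≠ 0 := by positivity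
      field_simp
    rw [hswap, ih (a + 1) c]
    have ha : ((a:ℝ) + 1) ≠ 0 := by positivity
    have hfa : (a.factorial : ℝ) ≠ 0 := Nat.cast_ne_zero.2 a.factorial_pos.ne'
    have hfb : (b.factorial : ℝ) ≠ 0 := Nat.cast_ne_zero.2 b.factorial_pos.ne'
    have hf1 : ((a + 1 + b + 1).factorial : ℝ) ≠ 0 :=
      Nat.cast_ne_zero.2 (a + 1 + b + 1).factorial_pos.ne'
    have he : a + (b + 1) + 1 = a + 1 + b + 1 := by omega
    rw [he]
    simp only [sub_self, zero_pow (by omega : a + 1 ≠ 0), zero_mul, sub_zero, mul_zero, zero_div]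
    rw [Nat.factorial_succ b, Nat.factorial_succ a]
    push_cast
    field_simp
    ring

/-- Lower incomplete gamma type integral with natural exponent. -/
lemma gamma_inc (n : ℕ) (m : ℝ) :
    (∫ u in (0:ℝ)..m, Real.exp (-u) * u ^ n / n.factorial)
      = 1 - ∑ l ∈ Finset.range (n + 1), Real.exp (-m) * m ^ l / l.factorial := by
  set F : ℝ → ℝ := fun u => -∑ l ∈ Finset.range (n + 1), Real.exp (-u) * u ^ l / l.factorial
    with hF
  have key : ∀ x : ℝ, HasDerivAt F (Real.exp (-x) * x ^ n / n.factorial) x := by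
    intro x
    have hterm : ∀ l ∈ Finset.range (n + 1),
        HasDerivAt (fun u : ℝ => Real.exp (-u) * u ^ l / l.factorial)
          ((-Real.exp (-x) * x ^ l + Real.exp (-x) * ((l : ℝ) * x ^ (l - 1)))
            / (l.factorial : ℝ)) x := by
      intro l _
      have he : HasDerivAt (fun u : ℝ => Real.exp (-u)) (-Real.exp (-x)) x := by
        simpa using ((hasDerivAt_id x).neg.exp)
      have hp : HasDerivAt (fun u : ℝ => u ^ l) ((l : ℝ) * x ^ (l - 1)) x :=
        hasDerivAt_pow l x
      exact ((he.mul hp).div_const _)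
    have hsum := (HasDerivAt.sum hterm).neg
    have hEq : -(∑ l ∈ Finset.range (n + 1),
        ((-Real.exp (-x) * x ^ l + Real.exp (-x) * ((l : ℝ) * x ^ (l - 1)))
          / (l.factorial : ℝ)))
        = Real.exp (-x) * x ^ n / n.factorial := by
      rw [Finset.sum_range_succ']
      have step : ∀ l ∈ Finset.range n,
          ((-Real.exp (-x) * x ^ (l + 1)
              + Real.exp (-x) * (((l + 1 : ℕ) : ℝ) * x ^ (l + 1 - 1)))
            / (((l + 1).factorial : ℕ) : ℝ))
          = (fun k : ℕ => Real.exp (-x) * x ^ k / k.factorial) l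
            - (fun k : ℕ => Real.exp (-x) * x ^ k / k.factorial) (l + 1) := by
        intro l _
        have hfl : (l.factorial : ℝ) ≠ 0 := Nat.cast_ne_zero.2 l.factorial_pos.ne'
        have hfl1 : ((l + 1).factorial : ℝ) ≠ 0 := Nat.cast_ne_zero.2 (l + 1).factorial_pos.ne'
        simp only [Nat.add_sub_cancel, Nat.factorial_succ]
        push_cast
        field_simp
        ring
      rw [Finset.sum_congr rfl step,
        Finset.sum_range_sub' (fun k : ℕ => Real.exp (-x) * x ^ k / k.factorial)]
      simp
    rw [hEq] at hsum
    exact hsum.congr_of_eventuallyEq (Filter.Eventually.of_forall fun u => by simp [hF])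
  have hint : IntervalIntegrable (fun u : ℝ => Real.exp (-u) * u ^ n / n.factorial)
      MeasureTheory.volume 0 m := (by fun_prop : Continuous _).intervalIntegrable _ _
  rw [integral_eq_sub_of_hasDerivAt (fun x _ => key x) hint]
  have hF0 : F 0 = -1 := by
    rw [hF]
    simp only [neg_zero, Real.exp_zero, one_mul]
    rw [Finset.sum_eq_single 0]
    · simp
    · intro l _ hl
      simp [zero_pow hl]
    · simp
  rw [hF0, hF]
  ring

/-- The joint density `f_{d_j, d_i | S_{K₂}}` of Theorem 2 of the paper
integrates to 1 over the region `{(r, s) : L₁ ≤ r ≤ s ≤ L₂}`. -/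
theorem stmt_5 (Δ lam L₁ L₂ : ℝ) (hΔ : 0 < Δ) (hlam : 0 < lam)
    (hL₁ : 0 ≤ L₁) (hL : L₁ < L₂) (j i : ℕ) (hj : 1 ≤ j) (hji : j < i)
    (μ C : ℝ) (hμ : μ = Δ * (L₂ ^ 2 - L₁ ^ 2) * lam)
    (hC : C = 1 - ∑ l ∈ Finset.range i, Real.exp (-μ) * μ ^ l / (l.factorial : ℝ))
    (hC0 : C ≠ 0)
    (f : ℝ → ℝ → ℝ)
    (hf : ∀ r s, f r s = ((2 * Δ * lam * r) * (2 * Δ * lam * s) / C) *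
      Real.exp (-(Δ * (s ^ 2 - L₁ ^ 2) * lam)) *
      ((Δ * (r ^ 2 - L₁ ^ 2) * lam) ^ (j - 1) / ((j - 1).factorial : ℝ)) *
      ((Δ * (s ^ 2 - r ^ 2) * lam) ^ (i - j - 1) / ((i - j - 1).factorial : ℝ))) :
    (∫ s in L₁..L₂, ∫ r in L₁..s, f r s) = 1 := by
  obtain ⟨a, rfl⟩ : ∃ a, j = a + 1 := ⟨j - 1, by omega⟩
  obtain ⟨b, rfl⟩ : ∃ b, i = a + 1 + b + 1 := ⟨i - (a + 1) - 1, by omega⟩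
  have hj1 : a + 1 - 1 = a := by omega
  have hij1 : a + 1 + b + 1 - (a + 1) - 1 = b := by omega
  set φ : ℝ → ℝ := fun x => Δ * (x ^ 2 - L₁ ^ 2) * lam with hφdef
  have hφ : ∀ x : ℝ, HasDerivAt φ (2 * Δ * lam * x) x := by
    intro x
    have h := (((hasDerivAt_pow 2 x).sub_const (L₁ ^ 2)).const_mul Δ).mul_const lam
    refine h.congr_deriv ?_
    push_cast
    ring
  have hφL₁ : φ L₁ = 0 := by simp [hφdef]
  have hφL₂ : φ L₂ = μ := by simp [hφdef, hμ]
  have hcontφ' : Continuous (fun r : ℝ => 2 * Δ * lam * r) := by fun_prop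
  have hfa : (a.factorial : ℝ) ≠ 0 := Nat.cast_ne_zero.2 a.factorial_pos.ne'
  have hfb : (b.factorial : ℝ) ≠ 0 := Nat.cast_ne_zero.2 b.factorial_pos.ne'
  have hfab : ((a + b + 1).factorial : ℝ) ≠ 0 := Nat.cast_ne_zero.2 (a + b + 1).factorial_pos.ne'
  -- inner integral
  have inner : ∀ s : ℝ, (∫ r in L₁..s, f r s)
      = (2 * Δ * lam * s) *
        (Real.exp (-(φ s)) * (φ s) ^ (a + b + 1) / ((a + b + 1).factorial : ℝ)) / C := by
    intro s
    have e1 : (∫ r in L₁..s, f r s)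
        = ((2 * Δ * lam * s) / C * Real.exp (-(φ s)) / ((a.factorial : ℝ) * (b.factorial : ℝ))) *
          ∫ r in L₁..s, (2 * Δ * lam * r) * ((φ r) ^ a * (φ s - φ r) ^ b) := by
      rw [← integral_const_mul]
      apply integral_congr
      intro r _
      simp only [hf, hj1, hij1, hφdef]
      ring
    have e2 : (∫ r in L₁..s, (2 * Δ * lam * r) * ((φ r) ^ a * (φ s - φ r) ^ b))
        = ∫ u in (0:ℝ)..(φ s), u ^ a * (φ s - u) ^ b := by
      rw [← hφL₁]
      rw [← integral_comp_smul_deriv (fun x _ => hφ x) hcontφ'.continuousOn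
        (g := fun u => u ^ a * (φ s - u) ^ b) (by fun_prop)]
      apply integral_congr
      intro r _
      simp [smul_eq_mul]
    rw [e1, e2, beta_nat]
    field_simp
  have outer : (∫ s in L₁..L₂, ∫ r in L₁..s, f r s)
      = (1 / C) * ∫ u in (0:ℝ)..μ,
          Real.exp (-u) * u ^ (a + b + 1) / ((a + b + 1).factorial : ℝ) := by
    rw [← hφL₁, ← hφL₂,
      ← integral_comp_smul_deriv (fun x _ => hφ x) hcontφ'.continuousOn
        (g := fun u => Real.exp (-u) * u ^ (a + b + 1) / ((a + b + 1).factorial : ℝ))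
        (by fun_prop), ← integral_const_mul]
    apply integral_congr
    intro s _
    simp only [inner, smul_eq_mul, Function.comp_apply]
    ring
  rw [outer, gamma_inc]
  have hrange : a + b + 1 + 1 = a + 1 + b + 1 := by omega
  rw [hrange, ← hC]
  field_simp
end
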